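/- For every h ∈ K{{x}}, the map θ := (h d/dx) = φ_{(x,h)} ∘ d : K{{x}} → K{{x}} is a derivation: it is K-linear, x-adically continuous, and satisfies θ(•_m(f_1,…,f_m)) = Σ_{i=1}^m •_m(f_1,…,f_{i−1}, θ(f_i), f_{i+1},…,f_m) for all m ≥ 2 and all f_1,…,f_m ∈ K{{x}}. -/

import Mathlib

namespace Planar

inductive PVar : Type
  | vx : PVar
  | vy : PVar
deriving DecidableEq

/-- A finite planar reduced rooted tree: every internal vertex has at least two
(ordered) children, encoded as `node t₁ t₂ rest` with children list `t₁ :: t₂ :: rest`;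
leaves are labeled by a variable (an isomorphism class of such a labeled tree is
faithfully represented by this inductive data). -/
inductive PTree : Type
  | leaf : PVar → PTree
  | node : PTree → PTree → List PTree → PTree

namespace PTree

/-- The number of leaves carrying the label `v`. -/
def countLeaf (v : PVar) : PTree → ℕ
  | .leaf w => if w = v then 1 else 0
  | .node t1 t2 rest =>
      countLeaf v t1 + countLeaf v t2 + (rest.attach.map fun t => countLeaf v t.1).sum
decreasing_by
  all_goals simp_wf
  · omega
  · omega
  · have := List.sizeOf_lt_of_mem t.2
    omega

end PTree

/-- `P'(x,y)`: planar monomials plus the empty tree `1_P` (= `none`). -/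
abbrev PT := Option PTree

/-- `deg_x`: the number of leaves labeled `x`. -/
def degx (S : PT) : ℕ := S.elim 0 (PTree.countLeaf .vx)

/-- `deg_y`: the number of leaves labeled `y`. -/
def degy (S : PT) : ℕ := S.elim 0 (PTree.countLeaf .vy)

/-- `m`-ary grafting `•_m` on `P'(x,y)` (`m = l.length`): join the non-trivial entries
at a new root; the conventions `•_m(1_P,…,1_P) = 1_P`, dropping of `1_P`-entries and
`•_2(S,1_P) = •_2(1_P,S) = S` amount to discarding the `1_P`-entries first. -/
def graft (l : List PT) : PT :=
  match l.reduceOption with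
  | [] => none
  | [t] => some t
  | t1 :: t2 :: ts => some (.node t1 t2 ts)

variable (K : Type) [Field K]

/-- The algebra `K{{x,y}` of planar power series in `x` and polynomials in `y`:
functions on `P'(x,y)` such that for every `n` only finitely many monomials of
`x`-degree `n` have a nonzero coefficient. -/
def PSer : Type := {f : PT → K // ∀ n : ℕ, {S : PT | f S ≠ 0 ∧ degx S = n}.Finite}

variable {K}

namespace PSer

private lemma finite_add (f g : PSer K) (n : ℕ) :
    {S : PT | f.1 S + g.1 S ≠ 0 ∧ degx S = n}.Finite := by
  apply ((f.2 n).union (g.2 n)).subset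
  rintro S ⟨hne, hdeg⟩
  by_cases h1 : f.1 S = 0
  · exact Or.inr ⟨by simpa [h1] using hne, hdeg⟩
  · exact Or.inl ⟨h1, hdeg⟩

private lemma finite_neg (f : PSer K) (n : ℕ) :
    {S : PT | -f.1 S ≠ 0 ∧ degx S = n}.Finite := by
  apply (f.2 n).subset
  rintro S ⟨hne, hdeg⟩
  exact ⟨by simpa using hne, hdeg⟩

private lemma finite_zero (n : ℕ) :
    {S : PT | (0 : K) ≠ 0 ∧ degx S = n}.Finite := by
  convert Set.finite_empty using 1
  ext S; simp

private lemma finite_smul (a : K) (f : PSer K) (n : ℕ) :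
    {S : PT | a * f.1 S ≠ 0 ∧ degx S = n}.Finite := by
  apply (f.2 n).subset
  rintro S ⟨hne, hdeg⟩
  exact ⟨fun h => hne (by simp [h]), hdeg⟩

noncomputable instance : AddCommGroup (PSer K) where
  add f g := ⟨fun S => f.1 S + g.1 S, finite_add f g⟩
  zero := ⟨fun _ => 0, finite_zero⟩
  neg f := ⟨fun S => -f.1 S, finite_neg f⟩
  add_assoc f g h := Subtype.ext (funext fun S => add_assoc _ _ _)
  add_comm f g := Subtype.ext (funext fun S => add_comm _ _)
  zero_add f := Subtype.ext (funext fun S => zero_add _)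
  add_zero f := Subtype.ext (funext fun S => add_zero _)
  neg_add_cancel f := Subtype.ext (funext fun S => neg_add_cancel _)
  nsmul n f := ⟨fun S => (n : K) * f.1 S, finite_smul _ f⟩
  nsmul_zero f := Subtype.ext (funext fun S => by
    show ((0 : ℕ) : K) * f.1 S = (0 : K); simp)
  nsmul_succ n f := Subtype.ext (funext fun S => by
    show ((n + 1 : ℕ) : K) * f.1 S = (n : K) * f.1 S + f.1 S; push_cast; ring)
  zsmul n f := ⟨fun S => (n : K) * f.1 S, finite_smul _ f⟩
  zsmul_zero' f := Subtype.ext (funext fun S => by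
    show ((0 : ℤ) : K) * f.1 S = (0 : K); simp)
  zsmul_succ' n f := Subtype.ext (funext fun S => by
    show ((Int.ofNat n.succ : ℤ) : K) * f.1 S = ((Int.ofNat n : ℤ) : K) * f.1 S + f.1 S
    simp only [Int.ofNat_eq_coe]; push_cast; ring)
  zsmul_neg' n f := Subtype.ext (funext fun S => by
    show ((Int.negSucc n : ℤ) : K) * f.1 S = -(((n.succ : ℤ) : K) * f.1 S)
    simp [Int.negSucc_eq]; push_cast; ring)

noncomputable instance : Module K (PSer K) where
  smul a f := ⟨fun S => a * f.1 S, finite_smul a f⟩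
  one_smul f := Subtype.ext (funext fun S => one_mul _)
  mul_smul a b f := Subtype.ext (funext fun S => mul_assoc _ _ _)
  smul_zero a := Subtype.ext (funext fun S => mul_zero _)
  smul_add a f g := Subtype.ext (funext fun S => mul_add _ _ _)
  add_smul a b f := Subtype.ext (funext fun S => add_mul _ _ _)
  zero_smul f := Subtype.ext (funext fun S => zero_mul _)

@[simp] lemma add_coeff (f g : PSer K) (S : PT) : (f + g).1 S = f.1 S + g.1 S := rfl
@[simp] lemma smul_coeff (a : K) (f : PSer K) (S : PT) : (a • f).1 S = a * f.1 S := rfl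
@[simp] lemma zero_coeff (S : PT) : (0 : PSer K).1 S = 0 := rfl

end PSer

open PSer

/-- The indicator series of a single planar monomial `S ∈ P'(x,y)`. -/
noncomputable def mono (S : PT) : PSer K := by
  classical
  refine ⟨fun T => if T = S then 1 else 0, fun n => (Set.finite_singleton S).subset ?_⟩
  rintro T ⟨h1, -⟩
  by_contra hc
  exact h1 (if_neg (by simpa [Set.mem_singleton_iff] using hc))

/-- The unit series `1_P` (the empty tree). -/
noncomputable def onePS : PSer K := mono none

/-- The series `x` (the one-vertex tree labeled `x`). -/
noncomputable def Xps : PSer K := mono (some (.leaf .vx))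

/-- The series `y = dx` (the one-vertex tree labeled `y`). -/
noncomputable def Yps : PSer K := mono (some (.leaf .vy))

/-- Coefficient of the product `•_m(f₁,…,f_m)` at `S`: the (finite) sum of
`c_{S₁}(f₁)⋯c_{S_m}(f_m)` over all decompositions `S = •_m(S₁,…,S_m)`. -/
noncomputable def bulletCoeff (fs : List (PSer K)) (S : PT) : K :=
  ∑ᶠ t ∈ {t : List PT | t.length = fs.length ∧ graft t = S},
    (List.zipWith (fun f u => f.1 u) fs t).prod

open Classical in
/-- The `m`-ary product `•_m(f₁,…,f_m)` on `K{{x,y}` (`m = fs.length`). -/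
noncomputable def bullet (fs : List (PSer K)) : PSer K :=
  if h : ∀ n : ℕ, {S : PT | bulletCoeff fs S ≠ 0 ∧ degx S = n}.Finite
  then ⟨bulletCoeff fs, h⟩ else 0

/-- The `x`-order `ord_x(f) ∈ ℕ ∪ {∞}`: the least `x`-degree of a monomial with
nonzero coefficient (`∞` for `f = 0`). -/
noncomputable def ordx (f : PSer K) : ℕ∞ :=
  ⨅ S ∈ {S : PT | f.1 S ≠ 0}, (degx S : ℕ∞)

/-- The `x`-adic absolute value `|f|ₓ = (1/2)^{ord_x f}` (`= 0` for `f = 0`). -/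
noncomputable def normx (f : PSer K) : ℝ :=
  if ordx f = ⊤ then 0 else (2⁻¹ : ℝ) ^ (ordx f).toNat

/-- The `x`-adic distance `|f - g|ₓ`. -/
noncomputable def distx (f g : PSer K) : ℝ := normx (f - g)

/-- A Cauchy sequence for the `x`-adic distance. -/
def IsCauchySeq (u : ℕ → PSer K) : Prop :=
  ∀ ε : ℝ, 0 < ε → ∃ N : ℕ, ∀ p q : ℕ, N ≤ p → N ≤ q → distx (u p) (u q) < ε

/-- Convergence of a sequence to `f` for the `x`-adic distance. -/
def TendstoSeq (u : ℕ → PSer K) (f : PSer K) : Prop :=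
  ∀ ε : ℝ, 0 < ε → ∃ N : ℕ, ∀ p : ℕ, N ≤ p → distx (u p) f < ε

/-- Continuity of a map between two spaces equipped with distance functions. -/
def ContWrt {α β : Type*} (dα : α → α → ℝ) (dβ : β → β → ℝ) (φ : α → β) : Prop :=
  ∀ a : α, ∀ ε : ℝ, 0 < ε → ∃ δ : ℝ, 0 < δ ∧ ∀ b : α, dα b a < δ → dβ (φ b) (φ a) < ε

/-- The property of being supported on monomials all of whose leaves are labeled `x`. -/
def OnlyX (f : PSer K) : Prop := ∀ S : PT, f.1 S ≠ 0 → degy S = 0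

variable (K) in
/-- `K{{x}}`, the closed unital subalgebra of `K{{x,y}` generated by `x`, as a
submodule: the series supported on `1_P` and trees all of whose leaves are labeled `x`. -/
noncomputable def kxSub : Submodule K (PSer K) where
  carrier := {f | OnlyX f}
  add_mem' := by
    intro f g hf hg S hS
    by_cases h1 : f.1 S = 0
    · exact hg S (by simpa [h1] using hS)
    · exact hf S h1
  zero_mem' := by intro S hS; simp at hS
  smul_mem' := by
    intro a f hf S hS
    exact hf S (fun h => hS (by simp [h]))

variable (K) in
/-- The space `K{{x}}` of planar power series in `x`. -/
abbrev Kx : Type _ := ↥(kxSub K)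

@[simp] lemma mem_kxSub {f : PSer K} : f ∈ kxSub K ↔ OnlyX f := Iff.rfl

/-- The `x`-adic distance on `K{{x}}`. -/
noncomputable def distKx (f g : Kx K) : ℝ := distx f.1 g.1

lemma onePS_mem_kxSub : onePS ∈ kxSub (K := K) := by
  intro S hS
  by_cases h : S = none
  · subst h; rfl
  · exact absurd (if_neg h) hS

lemma Xps_mem_kxSub : Xps ∈ kxSub (K := K) := by
  intro S hS
  by_cases h : S = some (.leaf .vx)
  · subst h; simp [degy, PTree.countLeaf]
  · exact absurd (if_neg h) hS

/-- `1_P` as an element of `K{{x}}`. -/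
noncomputable def oneX : Kx K := ⟨onePS, onePS_mem_kxSub⟩

/-- `x` as an element of `K{{x}}`. -/
noncomputable def xX : Kx K := ⟨Xps, Xps_mem_kxSub⟩

open Classical in
/-- The `m`-ary product `•_m` on `K{{x}}` (`m = fs.length`). -/
noncomputable def bulletX (fs : List (Kx K)) : Kx K :=
  if h : bullet (fs.map (fun f => f.1)) ∈ kxSub K
  then ⟨bullet (fs.map (fun f => f.1)), h⟩ else 0

open Classical in
/-- The homogeneous component of degree `n` (w.r.t. `deg_x`) of a planar power series. -/
noncomputable def comp (f : PSer K) (n : ℕ) : PSer K :=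
  ⟨fun S => if degx S = n then f.1 S else 0, by
    intro m
    apply (f.2 m).subset
    rintro S ⟨h1, h2⟩
    refine ⟨?_, h2⟩
    by_cases hd : degx S = n
    · simpa [hd] using h1
    · simp [hd] at h1⟩

/-- The homogeneous component of degree `n` of an element of `K{{x}}`. -/
noncomputable def compX (f : Kx K) (n : ℕ) : Kx K :=
  ⟨comp f.1 n, by
    intro S hS
    apply (mem_kxSub.mp f.2) S
    simp only [comp] at hS
    by_cases hd : degx S = n
    · simpa [hd] using hS
    · simp [hd] at hS⟩

/-- A substitution homomorphism `φ_{(g,h)} : K{{x,y} → K{{x,y}`: `K`-linear, compatible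
with all grafting operations `•_m` (`m ≥ 2`), unital, `x ↦ g`, `y ↦ h`, and continuous
for the `x`-adic topology. -/
structure IsSubstHom (g h : PSer K) (φ : PSer K → PSer K) : Prop where
  linear : IsLinearMap K φ
  map_graft : ∀ fs : List (PSer K), 2 ≤ fs.length → φ (bullet fs) = bullet (fs.map φ)
  map_one : φ onePS = onePS
  map_X : φ Xps = g
  map_Y : φ Yps = h
  cont : ContWrt distx distx φ

/-- A substitution homomorphism `φ_g : K{{x}} → K{{x}}` with `x ↦ g`. -/
structure IsSubstHomX (g : Kx K) (φ : Kx K → Kx K) : Prop where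
  linear : IsLinearMap K φ
  map_graft : ∀ fs : List (Kx K), 2 ≤ fs.length → φ (bulletX fs) = bulletX (fs.map φ)
  map_one : φ oneX = oneX
  map_X : φ xX = g
  cont : ContWrt distKx distKx φ

/-- The universal derivation `d : K{{x}} → K{{x,y}`: continuous, `K`-linear, `d x = y`,
and satisfying the Leibniz rule for every grafting operation `•_m` (`m ≥ 2`). -/
structure IsUDeriv (d : Kx K → PSer K) : Prop where
  linear : IsLinearMap K d
  cont : ContWrt distKx distx d
  map_X : d xX = Yps
  leibniz : ∀ fs : List (Kx K), 2 ≤ fs.length →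
    d (bulletX fs) = ∑ i : Fin fs.length,
      bullet ((fs.map (fun f => f.1)).set i.1 (d (fs.get i)))

/-- The `k`-ary planar exponential series `Exp_k(x)`: constant coefficient `1`,
coefficient `1` at `x`, and `Exp_k(kx) = •_k(Exp_k(x),…,Exp_k(x))`. -/
structure IsExp (k : ℕ) (f : Kx K) : Prop where
  coeff_one : f.1.1 none = 1
  coeff_X : f.1.1 (some (.leaf .vx)) = 1
  funEq : ∀ φ : Kx K → Kx K, IsSubstHomX ((k : K) • xX) φ →
    φ f = bulletX (List.replicate k f)

/-- `ℓ = Log_k(1+x)`, the planar logarithm attached to a planar exponential series `e`: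
`ord_x ℓ ≥ 1` and `ℓ(e - 1) = x`. -/
structure IsLogOf (e ℓ : Kx K) : Prop where
  ord : 1 ≤ ordx ℓ.1
  eq : ∀ φ : Kx K → Kx K, IsSubstHomX (e - oneX) φ → φ ℓ = xX

section Aux

variable {K : Type} [Field K]

/-- Evaluation of the coefficient at `T` as an additive monoid hom. -/
noncomputable def coeffHom (T : PT) : PSer K →+ K where
  toFun f := f.1 T
  map_zero' := rfl
  map_add' _ _ := rfl

lemma sum_coeff {ι : Type*} (F : Finset ι) (g : ι → PSer K) (T : PT) :
    (∑ i ∈ F, g i).1 T = ∑ i ∈ F, (g i).1 T :=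
  map_sum (coeffHom T) g F

open Classical in
@[simp] lemma mono_coeff (S T : PT) :
    (mono (K := K) S).1 T = if T = S then 1 else 0 := rfl

lemma ordx_le_of_ne {f : PSer K} {S : PT} (h : f.1 S ≠ 0) :
    ordx f ≤ (degx S : ℕ∞) := by
  exact biInf_le _ h

lemma le_ordx {f : PSer K} {n : ℕ} (h : ∀ S : PT, f.1 S ≠ 0 → (n : ℕ∞) ≤ degx S) :
    (n : ℕ∞) ≤ ordx f :=
  le_iInf fun S => le_iInf fun hS => h S hS

lemma normx_lt_of {g : PSer K} {n : ℕ}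
    (h : ∀ S : PT, degx S ≤ n → g.1 S = 0) : normx g < (2⁻¹ : ℝ) ^ n := by
  have hord : ((n + 1 : ℕ) : ℕ∞) ≤ ordx g := by
    apply le_ordx
    intro S hS
    have : ¬ degx S ≤ n := fun hle => hS (h S hle)
    exact_mod_cast Nat.succ_le_of_lt (Nat.lt_of_not_le this)
  unfold normx
  split_ifs with ht
  · positivity
  · have h1 : n + 1 ≤ (ordx g).toNat := by
      have := ENat.toNat_le_toNat hord ht
      simpa only [ENat.toNat_coe] using this
    calc ((2:ℝ)⁻¹) ^ (ordx g).toNat ≤ (2⁻¹ : ℝ) ^ (n+1) := by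
          apply pow_le_pow_of_le_one (by norm_num) (by norm_num) h1
      _ < (2⁻¹ : ℝ) ^ n := by
          apply pow_lt_pow_right_of_lt_one₀ (by norm_num) (by norm_num) (by omega)

lemma coeff_eq_zero_of_normx_lt {g : PSer K} {n : ℕ}
    (h : normx g < (2⁻¹ : ℝ) ^ n) : ∀ S : PT, degx S ≤ n → g.1 S = 0 := by
  intro S hS
  by_contra hne
  have hle : ordx g ≤ (degx S : ℕ∞) := ordx_le_of_ne hne
  have hnetop : ordx g ≠ ⊤ := fun ht => by simp [ht] at hle
  have hto : (ordx g).toNat ≤ degx S := by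
    have := ENat.toNat_le_toNat hle (by simp)
    simpa using this
  have : normx g = (2⁻¹ : ℝ) ^ (ordx g).toNat := by simp [normx, hnetop]
  rw [this] at h
  have h2 : (2⁻¹ : ℝ) ^ n ≤ (2⁻¹ : ℝ) ^ (ordx g).toNat :=
    pow_le_pow_of_le_one (by norm_num) (by norm_num) (by omega)
  linarith

end Aux
section Aux2

variable {K : Type} [Field K]

lemma reduceOption_map_some (l : List PTree) : (l.map some).reduceOption = l := by
  induction l with
  | nil => rfl
  | cons a l ih => simp [List.reduceOption_cons_of_some, ih]

lemma graft_map_some (t1 t2 : PTree) (ts : List PTree) :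
    graft ((t1 :: t2 :: ts).map some) = some (.node t1 t2 ts) := by
  rw [graft, reduceOption_map_some]

open Classical in
lemma zip_mono_prod (l : List PTree) (t : List PT) (hlen : t.length = l.length) :
    (List.zipWith (fun f u => f.1 u) (l.map (fun s => mono (K := K) (some s))) t).prod
      = if t = l.map some then 1 else 0 := by
  induction l generalizing t with
  | nil =>
    cases t with
    | nil => simp
    | cons a t => simp at hlen
  | cons a l ih =>
    cases t with
    | nil => simp at hlen
    | cons u t =>
      simp only [List.map_cons, List.zipWith_cons_cons, List.prod_cons, mono_coeff]
      rw [ih t (by simpa using hlen)]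
      by_cases h1 : u = some a <;> by_cases h2 : t = l.map some <;> simp [h1, h2]

open Classical in
lemma bulletCoeff_mono (l : List PTree) (T : PT) :
    bulletCoeff (l.map (fun s => mono (K := K) (some s))) T
      = if T = graft (l.map some) then 1 else 0 := by
  classical
  set fs := l.map (fun s => mono (K := K) (some s)) with hfs
  set t0 : List PT := l.map some with ht0
  have hlen0 : t0.length = fs.length := by simp [hfs, ht0]
  have hg : ∀ t : List PT, t.length = fs.length →
      (List.zipWith (fun f u => f.1 u) fs t).prod = if t = t0 then 1 else 0 := by
    intro t ht
    exact zip_mono_prod l t (by simpa [hfs] using ht)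
  rw [bulletCoeff]
  by_cases hT : T = graft t0
  · rw [if_pos hT]
    rw [finsum_mem_eq_sum_of_inter_support_eq _
      (t := ({t0} : Finset (List PT)))]
    · rw [Finset.sum_singleton, hg t0 hlen0]
      simp
    · ext t
      simp only [Set.mem_inter_iff, Set.mem_setOf_eq, Function.mem_support,
        Finset.coe_singleton, Set.mem_singleton_iff]
      constructor
      · rintro ⟨⟨hl, -⟩, hne⟩
        refine ⟨?_, hne⟩
        by_contra hne'
        exact hne (by rw [hg t hl, if_neg hne'])
      · rintro ⟨ht, hne⟩
        subst ht
        exact ⟨⟨hlen0, hT.symm⟩, hne⟩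
  · rw [if_neg hT]
    apply finsum_mem_of_eqOn_zero
    intro t ht
    obtain ⟨hl, hgr⟩ := ht
    show (List.zipWith (fun f u => f.1 u) fs t).prod = 0
    rw [hg t hl]
    rw [if_neg]
    rintro rfl
    exact hT hgr.symm

lemma bullet_mono (l : List PTree) :
    bullet (l.map (fun s => mono (K := K) (some s))) = mono (graft (l.map some)) := by
  have hc : bulletCoeff (l.map fun s => mono (K := K) (some s))
      = (mono (K := K) (graft (l.map some))).1 := by
    funext T
    rw [bulletCoeff_mono]
    rfl
  rw [bullet]
  have hp : ∀ n : ℕ, {S : PT | bulletCoeff (l.map fun s => mono (K := K) (some s)) S ≠ 0 ∧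
      degx S = n}.Finite := hc ▸ (mono (K := K) (graft (l.map some))).2
  exact (dif_pos hp).trans (Subtype.ext hc)

end Aux2
section Aux3

variable {K : Type} [Field K] {g : PSer K} {φ : PSer K → PSer K}

lemma phi_mono (hφ : IsSubstHom Xps g φ) :
    ∀ t : PTree, t.countLeaf .vy = 0 → φ (mono (some t)) = mono (some t) := by
  suffices H : ∀ n : ℕ, ∀ t : PTree, sizeOf t ≤ n → t.countLeaf .vy = 0 →
      φ (mono (some t)) = mono (some t) by
    exact fun t => H (sizeOf t) t le_rfl
  intro n
  induction n with
  | zero => intro t ht; cases t <;> simp at ht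
  | succ n ih =>
    intro t ht hy
    match t with
    | .leaf v =>
      cases v
      · exact hφ.map_X
      · simp [PTree.countLeaf] at hy
    | .node t1 t2 ts =>
      have hcl : ∀ u ∈ t1 :: t2 :: ts, u.countLeaf .vy = 0 := by
        rw [PTree.countLeaf] at hy
        intro u hu
        simp only [List.mem_cons] at hu
        rcases hu with rfl | rfl | hu
        · omega
        · omega
        · have hmem : u.countLeaf .vy ∈ ts.attach.map fun t => t.1.countLeaf .vy := by
            have : (⟨u, hu⟩ : {x // x ∈ ts}) ∈ ts.attach := List.mem_attach _ _
            exact List.mem_map_of_mem this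
          have := List.single_le_sum (l := ts.attach.map fun t => t.1.countLeaf .vy)
            (fun x _ => Nat.zero_le x) _ hmem
          omega
      have hsz : ∀ u ∈ t1 :: t2 :: ts, sizeOf u ≤ n := by
        intro u hu
        simp only [List.mem_cons] at hu
        have hlt : sizeOf u < sizeOf (PTree.node t1 t2 ts) := by
          rcases hu with rfl | rfl | hu
          · simp; omega
          · simp; omega
          · have := List.sizeOf_lt_of_mem hu
            simp; omega
        omega
      have key : mono (K := K) (some (.node t1 t2 ts))
          = bullet ((t1 :: t2 :: ts).map (fun s => mono (some s))) := by
        rw [bullet_mono, graft_map_some]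
      rw [key, hφ.map_graft _ (by simp)]
      have hmap : (((t1 :: t2 :: ts)).map (fun s => mono (K := K) (some s))).map φ
          = ((t1 :: t2 :: ts)).map (fun s => mono (some s)) := by
        rw [List.map_map]
        apply List.map_congr_left
        intro u hu
        exact ih u (hsz u hu) (hcl u hu)
      rw [hmap, ← key]

end Aux3
section Aux4

variable {K : Type} [Field K] {g : PSer K} {φ : PSer K → PSer K}

@[simp] lemma neg_coeff (f : PSer K) (S : PT) : (-f).1 S = -f.1 S := rfl

lemma sub_coeff (f f' : PSer K) (S : PT) : (f - f').1 S = f.1 S - f'.1 S := by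
  rw [sub_eq_add_neg, sub_eq_add_neg, add_coeff, neg_coeff]

lemma partial_finite (f : PSer K) (m : ℕ) :
    {S : PT | f.1 S ≠ 0 ∧ degx S ≤ m}.Finite := by
  apply Set.Finite.subset (Set.Finite.biUnion (Finset.range (m+1)).finite_toSet
    (fun n _ => f.2 n))
  rintro S ⟨h1, h2⟩
  exact Set.mem_biUnion (by simp; omega) ⟨h1, rfl⟩

/-- Partial sum of `f` up to `x`-degree `m`. -/
noncomputable def psum (f : PSer K) (m : ℕ) : PSer K :=
  ∑ S ∈ (partial_finite f m).toFinset, f.1 S • mono S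

open Classical in
lemma psum_coeff (f : PSer K) (m : ℕ) (T : PT) :
    (psum f m).1 T = if degx T ≤ m then f.1 T else 0 := by
  rw [psum, sum_coeff]
  have : ∀ S ∈ (partial_finite f m).toFinset,
      (f.1 S • mono (K := K) S).1 T = if T = S then f.1 S else 0 := by
    intro S _
    rw [smul_coeff, mono_coeff, mul_ite, mul_one, mul_zero]
  rw [Finset.sum_congr rfl this, Finset.sum_ite_eq (partial_finite f m).toFinset T f.1]
  by_cases hT : f.1 T = 0
  · simp [hT]
  · by_cases hd : degx T ≤ m <;> simp [Set.Finite.mem_toFinset, hT, hd]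

lemma phi_psum (hφ : IsSubstHom Xps g φ) (f : PSer K) (hf : OnlyX f) (m : ℕ) :
    φ (psum f m) = psum f m := by
  let L : PSer K →ₗ[K] PSer K := IsLinearMap.mk' φ hφ.linear
  show L (psum f m) = psum f m
  rw [psum, map_sum]
  apply Finset.sum_congr rfl
  intro S hS
  rw [Set.Finite.mem_toFinset] at hS
  rw [map_smul]
  congr 1
  show φ (mono S) = mono S
  match S with
  | none => exact hφ.map_one
  | some t => exact phi_mono hφ t (hf _ hS.1)

lemma phi_fix (hφ : IsSubstHom Xps g φ) (f : PSer K) (hf : OnlyX f) : φ f = f := by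
  refine Subtype.ext (funext fun S => ?_)
  set n := degx S with hn
  obtain ⟨δ, hδ, hcont⟩ := hφ.cont f ((2⁻¹ : ℝ) ^ n) (by positivity)
  obtain ⟨m₀, hm₀⟩ := exists_pow_lt_of_lt_one hδ (by norm_num : (2⁻¹ : ℝ) < 1)
  set m := max n m₀ with hm
  have h1 : distx (psum f m) f < δ := by
    have hlt : normx (psum f m - f) < (2⁻¹ : ℝ) ^ m := by
      apply normx_lt_of
      intro T hT
      rw [sub_coeff, psum_coeff, if_pos hT, sub_self]
    calc distx (psum f m) f < (2⁻¹ : ℝ) ^ m := hlt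
      _ ≤ (2⁻¹ : ℝ) ^ m₀ :=
          pow_le_pow_of_le_one (by norm_num) (by norm_num) (le_max_right _ _)
      _ < δ := hm₀
  have h2 := hcont (psum f m) h1
  rw [phi_psum hφ f hf] at h2
  have h3 := coeff_eq_zero_of_normx_lt (n := n) h2 S le_rfl
  rw [sub_coeff, psum_coeff, if_pos (hn ▸ le_max_left n m₀), sub_eq_zero] at h3
  exact h3.symm

end Aux4
end Planar

open Planar in
/-- For every `h ∈ K{{x}}`, the map `θ = (h d/dx) = φ_{(x,h)} ∘ d` is a
derivation on `K{{x}}`: `K`-linear, `x`-adically continuous, and satisfying the general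
product rule for every grafting operation `•_m` (`m ≥ 2`). -/
theorem planar_h_ddx_is_derivation (K : Type) [Field K]
    (h : Kx K)
    (φ : PSer K → PSer K) (hφ : IsSubstHom Xps h.1 φ)
    (d : Kx K → PSer K) (hd : IsUDeriv d) :
    IsLinearMap K (fun f : Kx K => φ (d f)) ∧
    ContWrt distKx distx (fun f : Kx K => φ (d f)) ∧
    (∀ fs : List (Kx K), 2 ≤ fs.length →
      φ (d (bulletX fs)) = ∑ i : Fin fs.length,
        bullet ((fs.map (fun t => t.1)).set i.1 (φ (d (fs.get i))))) := by
  obtain ⟨hdlin, hφlin⟩ := And.intro hd.linear hφ.linear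
  refine ⟨⟨fun a b => by rw [hdlin.map_add, hφlin.map_add],
          fun c a => by rw [hdlin.map_smul, hφlin.map_smul]⟩, ?_, ?_⟩
  · intro f ε hε
    obtain ⟨δ₁, hδ₁, hc₁⟩ := hφ.cont (d f) ε hε
    obtain ⟨δ₂, hδ₂, hc₂⟩ := hd.cont f δ₁ hδ₁
    exact ⟨δ₂, hδ₂, fun b hb => hc₁ (d b) (hc₂ b hb)⟩
  · intro fs h2
    rw [hd.leibniz fs h2]
    let L : PSer K →ₗ[K] PSer K := IsLinearMap.mk' φ hφ.linear
    show L _ = _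
    rw [map_sum]
    apply Finset.sum_congr rfl
    intro i _
    show φ (bullet ((fs.map fun f => f.1).set i.1 (d (fs.get i)))) = _
    rw [hφ.map_graft _ (by simp [List.length_set]; omega)]
    have hfix : (fs.map fun f => f.1).map φ = fs.map fun f => f.1 := by
      rw [List.map_map]
      exact List.map_congr_left fun u _ => phi_fix hφ u.1 u.2
    rw [List.map_set, hfix]
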